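/- For the canonical monomial path C_mono: t ↦ (t, t^2, ..., t^d) in ℝ^d, the entry σ_{i_1 i_2 ... i_k} of the k-th signature tensor equals the product ∏_{j=1}^{k} i_j/(i_1 + i_2 + ... + i_j). -/

import Mathlib

open scoped BigOperators
open Matrix

/-- Iterated-integral signature: `sigAux` integrates the head letter outermost. -/
noncomputable def sigAux (d : ℕ) (X : ℝ → Fin d → ℝ) : List (Fin d) → ℝ → ℝ
  | [], _ => 1
  | i :: w, t => ∫ s in (0:ℝ)..t, sigAux d X w s * deriv (fun u => X u i) s

/-- The signature coordinate σ_{i₁⋯i_k} of the path `X`, for the word `w = [i₁,…,i_k]`. -/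
noncomputable def sigEntry (d : ℕ) (X : ℝ → Fin d → ℝ) (w : List (Fin d)) : ℝ :=
  sigAux d X w.reverse 1

/-- A path `[0,1] → ℝ^d` is piecewise continuously differentiable. -/
def PiecewiseC1 (d : ℕ) (X : ℝ → Fin d → ℝ) : Prop :=
  ∃ (m : ℕ) (t : Fin (m + 1) → ℝ), StrictMono t ∧ t 0 = 0 ∧ t (Fin.last m) = 1 ∧
    ∀ i : Fin m, ContDiffOn ℝ 1 X (Set.Icc (t i.castSucc) (t i.succ))

/-- The canonical monomial path `t ↦ (t, t², …, t^d)` in `ℝ^d`. -/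
noncomputable def Cmono (d : ℕ) : ℝ → Fin d → ℝ := fun t j => t ^ ((j : ℕ) + 1)

/-- Sum of exponents of a word. -/
def Sw (d : ℕ) (w : List (Fin d)) : ℕ := (w.map (fun i : Fin d => (i : ℕ) + 1)).sum

/-- The coefficient of the signature entry. -/
noncomputable def Cw (d : ℕ) : List (Fin d) → ℝ
  | [] => 1
  | i :: w => Cw d w * (((i : ℕ) + 1 : ℝ) / (Sw d (i :: w) : ℝ))

lemma Sw_cons (d : ℕ) (a : Fin d) (w : List (Fin d)) :
    Sw d (a :: w) = (a : ℕ) + 1 + Sw d w := by simp [Sw]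

lemma Sw_reverse (d : ℕ) (w : List (Fin d)) : Sw d w.reverse = Sw d w := by
  simp only [Sw, List.map_reverse, List.sum_reverse]

lemma Sw_ofFn (d n : ℕ) (g : Fin n → Fin d) :
    Sw d (List.ofFn g) = ∑ j, ((g j : ℕ) + 1) := by
  simp only [Sw, List.map_ofFn, List.sum_ofFn, Function.comp]

lemma sigAux_eq (d : ℕ) (w : List (Fin d)) : ∀ t : ℝ,
    sigAux d (Cmono d) w t = Cw d w * t ^ Sw d w := by
  induction w with
  | nil => intro t; simp [sigAux, Cw, Sw]
  | cons i w ih =>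
    intro t
    have hd : (fun u : ℝ => Cmono d u i) = fun u : ℝ => u ^ ((i : ℕ) + 1) := rfl
    have key : (fun s : ℝ => sigAux d (Cmono d) w s * deriv (fun u => Cmono d u i) s)
        = fun s : ℝ => (Cw d w * (((i : ℕ) + 1 : ℝ))) * s ^ (Sw d w + (i : ℕ)) := by
      funext s
      rw [ih s, hd, deriv_pow_field]
      push_cast
      ring
    rw [sigAux, key, intervalIntegral.integral_const_mul, integral_pow]
    have hS : Sw d (i :: w) = Sw d w + (i : ℕ) + 1 := by
      rw [Sw_cons]; ring
    rw [Cw, hS]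
    simp only [zero_pow (Nat.succ_ne_zero _)]
    push_cast
    field_simp
    rw [sub_zero]

lemma Cw_rev (d : ℕ) : ∀ (k : ℕ) (i : Fin k → Fin d),
    Cw d (List.ofFn i).reverse =
      ∏ j : Fin k, (((i j : ℕ) + 1 : ℝ) /
        (∑ l ∈ Finset.univ.filter (fun l : Fin k => l ≤ j), ((i l : ℕ) + 1 : ℝ))) := by
  intro k
  induction k with
  | zero => intro i; simp [Cw]
  | succ n ih =>
    intro i
    have h1 : (List.ofFn i).reverse
        = i (Fin.last n) :: (List.ofFn (fun j : Fin n => i j.castSucc)).reverse := by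
      rw [List.ofFn_succ', List.concat_eq_append, List.reverse_append]
      simp
    rw [h1, Cw, ih]
    rw [Fin.prod_univ_castSucc]
    congr 1
    · apply Finset.prod_congr rfl
      intro j _
      congr 1
      rw [Finset.sum_filter, Finset.sum_filter, Fin.sum_univ_castSucc]
      have hlast : ¬ (Fin.last n ≤ j.castSucc) := by
        simp [Fin.le_castSucc_iff, Fin.lt_iff_val_lt_val]
      rw [if_neg hlast, add_zero]
      apply Finset.sum_congr rfl
      intro l _
      simp [Fin.castSucc_le_castSucc_iff]
    · have hfil : Finset.univ.filter (fun l : Fin (n + 1) => l ≤ Fin.last n)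
          = Finset.univ := by
        ext l; simp [Fin.le_last]
      rw [hfil]
      have hSnat : Sw d (i (Fin.last n) :: (List.ofFn fun j : Fin n => i j.castSucc).reverse)
          = ((i (Fin.last n) : ℕ) + 1) + ∑ j : Fin n, ((i j.castSucc : ℕ) + 1) := by
        rw [Sw_cons, Sw_reverse, Sw_ofFn]
      rw [hSnat]
      push_cast
      rw [Fin.sum_univ_castSucc]
      ring_nf

/-- The entry `σ_{i₁…i_k}` of the k-th signature tensor of the canonical monomial path
equals `∏_{j=1}^k i_j / (i_1 + ⋯ + i_j)`. -/
theorem monomial_path_signature (d k : ℕ) (hk : 1 ≤ k) (i : Fin k → Fin d) :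
    sigEntry d (Cmono d) (List.ofFn i) =
      ∏ j : Fin k, (((i j : ℕ) + 1 : ℝ) /
        (∑ l ∈ Finset.univ.filter (fun l : Fin k => l ≤ j), ((i l : ℕ) + 1 : ℝ))) := by
  rw [sigEntry, sigAux_eq, one_pow, mul_one, Cw_rev]
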